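/- Zeroes Lemma: let S be an N×N symmetric matrix with noncommutative polynomial entries. If some diagonal entry S_{ii} = 0 while a corresponding off-diagonal entry S_{ij} = (S_{ji})^T is nonzero, then S is not matrix positive; i.e., there exist a size n, a tuple X of real symmetric n×n matrices, and a vector v ∈ R^{Nn} such that v^T S(X) v < 0. -/

import Mathlib

noncomputable section

/-- Variables: `some i` is `xᵢ`, `none` is the direction variable `h`. -/
abbrev Var (g : ℕ) := Option (Fin g)

/-- Noncommutative polynomials `ℝ⟨x₁,…,x_g,h⟩`. -/
abbrev NC (g : ℕ) := MonoidAlgebra ℝ (FreeMonoid (Var g))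

/-- The monomial corresponding to a word. -/
def mono (g : ℕ) (w : List (Var g)) : NC g :=
  MonoidAlgebra.of ℝ (FreeMonoid (Var g)) (FreeMonoid.ofList w)

/-- The generator `xᵢ`. -/
def Xv (g : ℕ) (i : Fin g) : NC g := mono g [some i]

/-- The direction variable `h`. -/
def Hv (g : ℕ) : NC g := mono g [none]

/-- Directional derivative of a word in `xᵢ` in direction `h`: sum of the
terms obtained by replacing one occurrence of `xᵢ` by `h`. -/
def wordD (g : ℕ) (i : Fin g) : List (Var g) → NC g
  | [] => 0
  | a :: w =>
      (if a = some i then mono g (none :: w) else 0) + mono g [a] * wordD g i w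

/-- Directional derivative `D[p, xᵢ, h]`, extended linearly from words. -/
def D (g : ℕ) (i : Fin g) (p : NC g) : NC g :=
  Finsupp.sum p.coeff fun w c => c • wordD g i (FreeMonoid.toList w)

/-- The noncommutative Laplacian `Lap[p,h] := ∑ᵢ D[D[p,xᵢ,h],xᵢ,h]`. -/
def Lap (g : ℕ) (p : NC g) : NC g := ∑ i : Fin g, D g i (D g i p)

/-- The transpose: linear anti-automorphism reversing words and fixing generators. -/
def transp (g : ℕ) (p : NC g) : NC g :=
  MonoidAlgebra.ofCoeff (Finsupp.mapDomain (fun w => FreeMonoid.ofList (FreeMonoid.toList w).reverse) p.coeff)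

/-- Evaluation of a polynomial at a tuple of matrices (one for each variable). -/
def eval (g n : ℕ) (M : Var g → Matrix (Fin n) (Fin n) ℝ) (p : NC g) :
    Matrix (Fin n) (Fin n) ℝ :=
  Finsupp.sum p.coeff fun w c => c • ((FreeMonoid.toList w).map M).prod

/-- `p` is a polynomial in `x₁,…,x_g` only (the variable `h` does not occur). -/
def NoH (g : ℕ) (p : NC g) : Prop :=
  ∀ w ∈ p.coeff.support, none ∉ FreeMonoid.toList w

/-- `p` is a homogeneous polynomial of degree `d` in the variables `x₁,…,x_g`. -/
def HomogX (g : ℕ) (d : ℕ) (p : NC g) : Prop :=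
  ∀ w ∈ p.coeff.support, none ∉ FreeMonoid.toList w ∧ (FreeMonoid.toList w).length = d



open Matrix




def eval' {g : ℕ} {ι : Type} [Fintype ι] [DecidableEq ι]
    (M : Var g → Matrix ι ι ℝ) (p : NC g) : Matrix ι ι ℝ :=
  Finsupp.sum p.coeff fun w c => c • ((FreeMonoid.toList w).map M).prod



/-- Words of length at most `d`. -/
abbrev Wd (g d : ℕ) := {l : List (Var g) // l.length ≤ d}

def padW (g d : ℕ) (l : Wd g d) : Fin d → Option (Var g) := fun k => l.1[k.1]?

lemma padW_inj (g d : ℕ) : Function.Injective (padW g d) := by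
  intro l₁ l₂ h
  have h₁ := l₁.2
  have h₂ := l₂.2
  apply Subtype.ext
  apply List.ext_getElem?
  intro n
  by_cases hn : n < d
  · exact congrFun h ⟨n, hn⟩
  · rw [List.getElem?_eq_none (by omega), List.getElem?_eq_none (by omega)]

instance (g d : ℕ) : Fintype (Wd g d) := Fintype.ofInjective _ (padW_inj g d)

/-- indicator basis vector of a word -/
def ev (g d : ℕ) (w : List (Var g)) : Wd g d → ℝ := fun v => if v.1 = w then 1 else 0

/-- left creation operator -/
def Lmat (g d : ℕ) (a : Var g) : Matrix (Wd g d) (Wd g d) ℝ :=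
  fun u v => if u.1 = a :: v.1 then 1 else 0

def Smat (g d : ℕ) (a : Var g) : Matrix (Wd g d) (Wd g d) ℝ :=
  Lmat g d a + (Lmat g d a)ᵀ

lemma Smat_isSymm (g d : ℕ) (a : Var g) : (Smat g d a).IsSymm :=
  Matrix.isSymm_add_transpose_self _

lemma Lmat_mulVec_nil (g d : ℕ) (a : Var g) (f : Wd g d → ℝ) (h : ([] : List (Var g)).length ≤ d) :
    ((Lmat g d a).mulVec f) ⟨[], h⟩ = 0 := by
  simp only [Matrix.mulVec, dotProduct, Lmat]
  apply Finset.sum_eq_zero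
  intro w _
  simp

lemma Lmat_mulVec_cons (g d : ℕ) (a b : Var g) (r : List (Var g)) (hr : (b :: r).length ≤ d)
    (f : Wd g d → ℝ) :
    ((Lmat g d a).mulVec f) ⟨b :: r, hr⟩ =
      if b = a then f ⟨r, by simpa using Nat.le_of_succ_le hr⟩ else 0 := by
  simp only [Matrix.mulVec, dotProduct, Lmat]
  by_cases hba : b = a
  · subst hba
    rw [if_pos rfl,
      Fintype.sum_eq_single (⟨r, by simpa using Nat.le_of_succ_le hr⟩ : Wd g d)]
    · simp
    · intro w hw
      have : ¬ (b :: r = b :: w.1) := by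
        intro hc
        exact hw (Subtype.ext (by simpa using hc.symm))
      simp [this]
  · rw [if_neg hba]
    apply Finset.sum_eq_zero
    intro w _
    have : ¬ (b :: r = a :: w.1) := by intro hc; exact hba (by injection hc)
    simp [this]

lemma LmatT_mulVec (g d : ℕ) (a : Var g) (f : Wd g d → ℝ) (v : Wd g d) :
    (((Lmat g d a)ᵀ).mulVec f) v =
      if h : (a :: v.1).length ≤ d then f ⟨a :: v.1, h⟩ else 0 := by
  simp only [Matrix.mulVec, dotProduct, Matrix.transpose_apply, Lmat]
  by_cases h : (a :: v.1).length ≤ d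
  · rw [dif_pos h, Fintype.sum_eq_single (⟨a :: v.1, h⟩ : Wd g d)]
    · simp
    · intro w hw
      have : ¬ (w.1 = a :: v.1) := fun hc => hw (Subtype.ext hc)
      simp [this]
  · rw [dif_neg h]
    apply Finset.sum_eq_zero
    intro w _
    have : ¬ (w.1 = a :: v.1) := by
      intro hc
      apply h; rw [← hc]; exact w.2
    simp [this]

lemma key (g d : ℕ) (u : List (Var g)) (hu : u.length ≤ d) (v : Wd g d)
    (hv : u.length ≤ v.1.length) :
    (((u.map (Smat g d)).prod).mulVec (ev g d [])) v = if v.1 = u then 1 else 0 := by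
  induction u generalizing v with
  | nil => simp [ev, Matrix.one_mulVec]
  | cons a u' ih =>
    have hu' : u'.length ≤ d := by simp at hu; omega
    rw [List.map_cons, List.prod_cons, ← Matrix.mulVec_mulVec]
    set f := ((u'.map (Smat g d)).prod).mulVec (ev g d []) with hf
    have hS : (Smat g d a).mulVec f v
        = (Lmat g d a).mulVec f v + ((Lmat g d a)ᵀ).mulVec f v := by
      rw [Smat, Matrix.add_mulVec]; rfl
    rw [hS, LmatT_mulVec]
    have h2 : (if h : (a :: v.1).length ≤ d then f ⟨a :: v.1, h⟩ else 0) = 0 := by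
      split
      · rename_i hlen
        rw [ih hu' ⟨a :: v.1, hlen⟩ (by simp at hv ⊢; omega)]
        have : ¬ ((a :: v.1 : List (Var g)) = u') := by
          intro hc
          have := congrArg List.length hc
          simp at this hv
          omega
        simp [this]
      · rfl
    rw [h2, add_zero]
    obtain ⟨l, hl⟩ := v
    match l with
    | [] =>
      simp at hv
    | b :: r =>
      rw [Lmat_mulVec_cons]
      have hrd : r.length ≤ d := by simp at hl; omega
      by_cases hba : b = a
      · subst hba
        rw [if_pos rfl, ih hu' ⟨r, hrd⟩ (by simp at hv ⊢; omega)]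
        by_cases hru : r = u'
        · simp [hru]
        · have : ¬ ((b :: r : List (Var g)) = b :: u') := by simpa using hru
          simp [hru, this]
      · have : ¬ ((b :: r : List (Var g)) = a :: u') := by intro hc; exact hba (by injection hc)
        simp [hba, this]

lemma eval_eq_eval' (g n : ℕ) (M : Var g → Matrix (Fin n) (Fin n) ℝ) (p : NC g) :
    eval g n M p = eval' M p := rfl

/-- quadratic-form linear functional -/
def qf {ι : Type} [Fintype ι] (x y : ι → ℝ) : Matrix ι ι ℝ →ₗ[ℝ] ℝ where
  toFun A := x ⬝ᵥ A.mulVec y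
  map_add' A B := by
    show x ⬝ᵥ (A + B) *ᵥ y = x ⬝ᵥ A *ᵥ y + x ⬝ᵥ B *ᵥ y
    rw [Matrix.add_mulVec, dotProduct_add]
  map_smul' c A := by
    show x ⬝ᵥ (c • A) *ᵥ y = (RingHom.id ℝ) c • (x ⬝ᵥ A *ᵥ y)
    rw [Matrix.smul_mulVec, dotProduct_smul]; rfl

lemma qf_eval' {g : ℕ} {ι : Type} [Fintype ι] [DecidableEq ι]
    (M : Var g → Matrix ι ι ℝ) (p : NC g) (x y : ι → ℝ) :
    x ⬝ᵥ (eval' M p).mulVec y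
      = Finsupp.sum p.coeff fun w c => c * (x ⬝ᵥ (((FreeMonoid.toList w).map M).prod.mulVec y)) := by
  have : x ⬝ᵥ (eval' M p).mulVec y = qf x y (eval' M p) := rfl
  rw [this, eval', map_finsuppSum]
  apply Finsupp.sum_congr
  intro w _
  rw [_root_.map_smul]
  rfl

lemma eval'_algEquiv {g : ℕ} {ι κ : Type} [Fintype ι] [DecidableEq ι] [Fintype κ] [DecidableEq κ]
    (φ : Matrix ι ι ℝ ≃ₐ[ℝ] Matrix κ κ ℝ) (M : Var g → Matrix ι ι ℝ) (p : NC g) :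
    eval' (fun v => φ (M v)) p = φ (eval' M p) := by
  unfold eval'
  rw [map_finsuppSum]
  apply Finsupp.sum_congr
  intro w _
  rw [_root_.map_smul]
  rw [map_list_prod, List.map_map]
  rfl

lemma eval'_transp {g : ℕ} {ι : Type} [Fintype ι] [DecidableEq ι]
    (M : Var g → Matrix ι ι ℝ) (hM : ∀ v, (M v).IsSymm) (q : NC g) :
    eval' M (transp g q) = (eval' M q)ᵀ := by
  unfold eval' transp
  rw [MonoidAlgebra.coeff_ofCoeff]
  rw [Finsupp.sum_mapDomain_index (by intro b; rw [zero_smul])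
    (by intro b m₁ m₂; rw [add_smul])]
  rw [Finsupp.sum, Finsupp.sum, Matrix.transpose_sum]
  apply Finset.sum_congr rfl
  intro w _
  rw [Matrix.transpose_smul, Matrix.transpose_list_prod]
  congr 1
  rw [List.map_map]
  have : (Matrix.transpose ∘ M) = M := by
    funext v; exact hM v
  rw [this, ← List.map_reverse]
  congr 1

lemma ev_dot {g d : ℕ} (w : List (Var g)) (hw : w.length ≤ d) (z : Wd g d → ℝ) :
    ev g d w ⬝ᵥ z = z ⟨w, hw⟩ := by
  unfold dotProduct ev
  rw [Fintype.sum_eq_single (⟨w, hw⟩ : Wd g d)]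
  · simp
  · intro v hv
    have : ¬ v.1 = w := fun hc => hv (Subtype.ext hc)
    simp [this]

lemma core (g : ℕ) (p : NC g) (hp : p ≠ 0) :
    ∃ (n : ℕ) (M : Var g → Matrix (Fin n) (Fin n) ℝ), (∀ v, (M v).IsSymm) ∧
      ∃ a b : Fin n → ℝ, a ⬝ᵥ (eval g n M p).mulVec b ≠ 0 := by
  have hsupp : p.coeff.support.Nonempty :=
    Finsupp.support_nonempty_iff.mpr (MonoidAlgebra.coeff_eq_zero.not.mpr hp)
  have hlne : (p.coeff.support.image (fun w => (FreeMonoid.toList w).length)).Nonempty :=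
    hsupp.image _
  set d := (p.coeff.support.image (fun w => (FreeMonoid.toList w).length)).max' hlne with hd
  obtain ⟨w₀, hw₀mem, hw₀len⟩ : ∃ w₀ ∈ p.coeff.support, (FreeMonoid.toList w₀).length = d := by
    have hm := Finset.max'_mem _ hlne
    rw [Finset.mem_image] at hm
    obtain ⟨w₀, h1, h2⟩ := hm
    exact ⟨w₀, h1, h2⟩
  have hlen_le : ∀ w ∈ p.coeff.support, (FreeMonoid.toList w).length ≤ d :=
    fun w hw => Finset.le_max' _ _ (Finset.mem_image_of_mem _ hw)
  have hw₀d : (FreeMonoid.toList w₀).length ≤ d := le_of_eq hw₀len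
  have hval : (ev g d (FreeMonoid.toList w₀)) ⬝ᵥ (eval' (Smat g d) p).mulVec (ev g d [])
      = p.coeff w₀ := by
    rw [qf_eval', Finsupp.sum, Finset.sum_eq_single w₀]
    · rw [ev_dot _ hw₀d, key g d _ hw₀d ⟨_, hw₀d⟩ (le_refl _), if_pos rfl, mul_one]
    · intro w hw hne
      rw [ev_dot _ hw₀d,
        key g d _ (hlen_le w hw) ⟨_, hw₀d⟩ (by rw [hw₀len]; exact hlen_le w hw)]
      have : ¬ (FreeMonoid.toList w₀ = FreeMonoid.toList w) := by
        intro hc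
        exact hne (FreeMonoid.toList.injective hc).symm
      rw [if_neg this, mul_zero]
    · intro h; exact absurd hw₀mem h
  have hne0 : (ev g d (FreeMonoid.toList w₀)) ⬝ᵥ (eval' (Smat g d) p).mulVec (ev g d []) ≠ 0 := by
    rw [hval]; exact Finsupp.mem_support_iff.mp hw₀mem
  set n := Fintype.card (Wd g d) with hn
  set e : Wd g d ≃ Fin n := Fintype.equivFin _ with he
  refine ⟨n, fun v => (Matrix.reindexAlgEquiv ℝ ℝ e) (Smat g d v), ?_,
    ev g d (FreeMonoid.toList w₀) ∘ e.symm, ev g d [] ∘ e.symm, ?_⟩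
  · intro v
    show ((Matrix.reindexAlgEquiv ℝ ℝ e) (Smat g d v))ᵀ = _
    rw [Matrix.reindexAlgEquiv_apply, Matrix.reindex_apply, Matrix.transpose_submatrix,
      (Smat_isSymm g d v).eq]
    rfl
  · rw [eval_eq_eval', eval'_algEquiv, Matrix.reindexAlgEquiv_apply, Matrix.reindex_apply,
      Matrix.submatrix_mulVec_equiv]
    have hb : (ev g d [] ∘ ⇑e.symm) ∘ ⇑e.symm.symm = ev g d [] := by
      funext w; simp
    rw [hb]
    have : (ev g d (FreeMonoid.toList w₀) ∘ ⇑e.symm) ⬝ᵥ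
        (((eval' (Smat g d) p).mulVec (ev g d [])) ∘ ⇑e.symm)
        = (ev g d (FreeMonoid.toList w₀)) ⬝ᵥ ((eval' (Smat g d) p).mulVec (ev g d [])) :=
      Fintype.sum_equiv e.symm _ _ (fun k => rfl)
    rw [this]
    exact hne0


/-- Zeroes Lemma: a symmetric matrix of noncommutative polynomials
with a zero diagonal entry but a nonzero corresponding off-diagonal entry is not
matrix positive. -/
theorem zeroes_lemma (g N : ℕ) (S : Fin N → Fin N → NC g)
    (hnoH : ∀ i j, NoH g (S i j))
    (hsym : ∀ i j, S j i = transp g (S i j))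
    (i j : Fin N) (hij : i ≠ j) (hdiag : S i i = 0) (hoff : S i j ≠ 0) :
    ∃ (n : ℕ) (M : Var g → Matrix (Fin n) (Fin n) ℝ),
      (∀ v, (M v).IsSymm) ∧
      ∃ v : Fin N → Fin n → ℝ,
        (∑ k : Fin N, ∑ l : Fin N,
          dotProduct (v k) ((eval g n M (S k l)).mulVec (v l))) < 0 := by
  obtain ⟨n, M, hMsym, a, b, hc⟩ := core g (S i j) hoff
  set A := eval g n M (S i j) with hA
  set c := a ⬝ᵥ A.mulVec b with hcdef
  set q := b ⬝ᵥ (eval g n M (S j j)).mulVec b with hq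
  set t := -c / (|q| + 1) with ht
  set v : Fin N → Fin n → ℝ := fun k => if k = i then a else if k = j then t • b else 0 with hv
  refine ⟨n, M, hMsym, v, ?_⟩
  have hvi : v i = a := by simp [hv]
  have hvj : v j = t • b := by simp [hv, hij.symm]
  have hv0 : ∀ k, k ≠ i → k ≠ j → v k = 0 := by
    intro k h1 h2; simp [hv, h1, h2]
  have pair : ∀ (f : Fin N → ℝ), (∀ k, k ≠ i → k ≠ j → f k = 0) → ∑ k, f k = f i + f j := by
    intro f hf
    rw [← Finset.sum_subset (Finset.subset_univ {i, j})]
    · exact Finset.sum_pair hij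
    · intro k _ hk
      simp only [Finset.mem_insert, Finset.mem_singleton] at hk
      push_neg at hk
      exact hf k hk.1 hk.2
  have inner : ∀ k, ∑ l, v k ⬝ᵥ (eval g n M (S k l)).mulVec (v l)
      = v k ⬝ᵥ (eval g n M (S k i)).mulVec (v i)
        + v k ⬝ᵥ (eval g n M (S k j)).mulVec (v j) := by
    intro k
    apply pair
    intro l h1 h2
    rw [hv0 l h1 h2, Matrix.mulVec_zero, dotProduct_zero]
  rw [pair _ (fun k h1 h2 => by
    rw [Finset.sum_eq_zero]
    intro l _
    rw [hv0 k h1 h2, zero_dotProduct])]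
  rw [inner i, inner j, hvi, hvj]
  have e_ii : a ⬝ᵥ (eval g n M (S i i)).mulVec a = 0 := by
    rw [hdiag]
    have h0 : eval g n M (0 : NC g) = 0 := Finsupp.sum_zero_index
    rw [h0, Matrix.zero_mulVec, dotProduct_zero]
  have e_ij : a ⬝ᵥ A.mulVec (t • b) = t * c := by
    rw [Matrix.mulVec_smul, dotProduct_smul, hcdef]; rfl
  have hAji : eval g n M (S j i) = Aᵀ := by
    rw [hsym i j, hA, eval_eq_eval', eval_eq_eval', eval'_transp M hMsym]
  have e_ji : (t • b) ⬝ᵥ (eval g n M (S j i)).mulVec a = t * c := by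
    rw [hAji, smul_dotProduct, Matrix.mulVec_transpose, dotProduct_comm,
      ← Matrix.dotProduct_mulVec]
    rfl
  have e_jj : (t • b) ⬝ᵥ (eval g n M (S j j)).mulVec (t • b) = t * (t * q) := by
    rw [smul_dotProduct, Matrix.mulVec_smul, dotProduct_smul, ← hq]
    rfl
  rw [e_ii, e_ij, e_ji, e_jj]
  have hc' : c ≠ 0 := hc
  have habs : (0:ℝ) < |q| + 1 := by positivity
  have keyeq : (0 + t * c) + (t * c + t * (t * q))
      = (c^2 / (|q|+1)^2) * (q - 2*(|q|+1)) := by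
    rw [ht]; field_simp; ring
  rw [keyeq]
  apply mul_neg_of_pos_of_neg
  · positivity
  · nlinarith [le_abs_self q, abs_nonneg q]
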